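/- Let ξ ∈ C²(S¹;ℝ^d) solve ∂_s(σ∂_sξ) + ξ = 0 with |∂_s ξ| ≡ 1. Then: (a) ∫₀¹ σ ds = ∫₀¹ |ξ|² ds; (b) σ(s) + (1/2)|ξ(s)|² = (3/2) σ̄ for all s, where σ̄ = ∫₀¹ σ ds; (c) τ := σ² satisfies the first integral (1/2)(∂_s τ)² + V(τ) = λ with V(τ) = 4τ^{3/2} − 6 τ̄ τ, τ̄ = ∫₀¹ τ^{1/2} ds, and λ = V(τ_e) at any extreme value τ_e of τ; moreover λ ∈ [−2τ̄³, 0). -/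

import Mathlib

open Real MeasureTheory intervalIntegral

noncomputable section

open scoped RealInnerProductSpace

/-- For a stationary solution of the normalized flow:
(a) `∫σ = ∫|ξ|²`; (b) `σ + (1/2)|ξ|² = (3/2)σ̄`; (c) `τ = σ²` admits the first
integral `(1/2)(∂_s τ)² + 4τ^{3/2} - 6τ̄τ = λ` with `λ ∈ [-2τ̄³, 0)`. -/
theorem stmt14 (d : ℕ)
    (ξ : ℝ → EuclideanSpace ℝ (Fin d)) (σ : ℝ → ℝ)
    (hξ : ContDiff ℝ 2 ξ) (hσ : ContDiff ℝ 2 σ)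
    (hperξ : Function.Periodic ξ 1) (hperσ : Function.Periodic σ 1)
    (hσpos : ∀ s, 0 < σ s)
    (hspeed : ∀ s, ‖deriv ξ s‖ = 1)
    (hstat : ∀ s, deriv (fun r => σ r • deriv ξ r) s + ξ s = 0)
    (hmult : ∀ s, deriv (deriv σ) s - σ s * ‖deriv (deriv ξ) s‖ ^ 2 = -1) :
    ((∫ s in (0:ℝ)..1, σ s) = ∫ s in (0:ℝ)..1, ‖ξ s‖ ^ 2) ∧
    (∀ s, σ s + (1/2) * ‖ξ s‖ ^ 2 = (3/2) * ∫ r in (0:ℝ)..1, σ r) ∧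
    (∃ lam : ℝ, lam ∈ Set.Ico (-2 * (∫ r in (0:ℝ)..1, σ r) ^ 3) 0 ∧
      ∀ s, (1/2) * (deriv (fun r => σ r ^ 2) s) ^ 2
          + (4 * (σ s ^ 2) ^ ((3:ℝ)/2) - 6 * (∫ r in (0:ℝ)..1, σ r) * σ s ^ 2)
        = lam) := by
  -- basic differentiability
  have h21 : (2 : WithTop ℕ∞) = 1 + 1 := by norm_num
  have hξd : Differentiable ℝ ξ := hξ.differentiable two_ne_zero
  have hξ1 : ContDiff ℝ 1 (deriv ξ) := by
    rw [h21, contDiff_succ_iff_deriv] at hξ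
    exact hξ.2.2
  have hξd' : Differentiable ℝ (deriv ξ) := hξ1.differentiable one_ne_zero
  have hσd : Differentiable ℝ σ := hσ.differentiable two_ne_zero
  have hσ1 : ContDiff ℝ 1 (deriv σ) := by
    rw [h21, contDiff_succ_iff_deriv] at hσ
    exact hσ.2.2
  have hσd' : Differentiable ℝ (deriv σ) := hσ1.differentiable one_ne_zero
  have hσc : Continuous σ := hσd.continuous
  have hξc : Continuous ξ := hξd.continuous
  -- HasDerivAt abbreviations
  have Hξ : ∀ s, HasDerivAt ξ (deriv ξ s) s := fun s => (hξd s).hasDerivAt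
  have Hξ' : ∀ s, HasDerivAt (deriv ξ) (deriv (deriv ξ) s) s := fun s => (hξd' s).hasDerivAt
  have Hσ : ∀ s, HasDerivAt σ (deriv σ s) s := fun s => (hσd s).hasDerivAt
  have Hσ' : ∀ s, HasDerivAt (deriv σ) (deriv (deriv σ) s) s := fun s => (hσd' s).hasDerivAt
  -- the pointwise ODE
  have hODE : ∀ s, σ s • deriv (deriv ξ) s + deriv σ s • deriv ξ s = -ξ s := by
    intro s
    have hp : HasDerivAt (fun r => σ r • deriv ξ r)
        (σ s • deriv (deriv ξ) s + deriv σ s • deriv ξ s) s := (Hσ s).smul (Hξ' s)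
    have h := hstat s
    rw [hp.deriv] at h
    exact eq_neg_of_add_eq_zero_left h
  -- orthogonality ⟪ξ', ξ''⟫ = 0
  have horth : ∀ s, ((inner ℝ (deriv ξ s) (deriv (deriv ξ) s) : ℝ) = 0) := by
    intro s
    have hD : HasDerivAt (fun t => (inner ℝ (deriv ξ t) (deriv ξ t) : ℝ))
        ((inner ℝ (deriv ξ s) (deriv (deriv ξ) s) : ℝ) + (inner ℝ (deriv (deriv ξ) s) (deriv ξ s) : ℝ)) s :=
      (Hξ' s).inner ℝ (Hξ' s)
    have hconst : (fun t => (inner ℝ (deriv ξ t) (deriv ξ t) : ℝ)) = fun _ => (1:ℝ) := by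
      funext t
      rw [real_inner_self_eq_norm_sq, hspeed t]; norm_num
    rw [hconst] at hD
    have h0 := hD.unique (hasDerivAt_const s 1)
    have h1 : (inner ℝ (deriv (deriv ξ) s) (deriv ξ s) : ℝ) = 0 := by
      rw [real_inner_comm (deriv (deriv ξ) s) (deriv ξ s)] at h0
      linarith
    rw [real_inner_comm]
    exact h1
  have hone : ∀ s, ((inner ℝ (deriv ξ s) (deriv ξ s) : ℝ) = 1) := by
    intro s; rw [real_inner_self_eq_norm_sq, hspeed s]; norm_num
  -- inner product of ODE with ξ'
  have hb' : ∀ s, deriv σ s + (inner ℝ (ξ s) (deriv ξ s) : ℝ) = 0 := by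
    intro s
    have h2 : (inner ℝ (σ s • deriv (deriv ξ) s + deriv σ s • deriv ξ s) (deriv ξ s) : ℝ)
        = (inner ℝ (-ξ s) (deriv ξ s) : ℝ) := by rw [hODE s]
    rw [inner_add_left, real_inner_smul_left, real_inner_smul_left, inner_neg_left,
      real_inner_comm (deriv ξ s) (deriv (deriv ξ) s)] at h2
    rw [horth s, hone s] at h2
    linarith [h2]
  -- frame identity ‖ξ‖² = σ'² + σ²‖ξ''‖²
  have hframe : ∀ s, ‖ξ s‖ ^ 2 = (deriv σ s) ^ 2 + (σ s) ^ 2 * ‖deriv (deriv ξ) s‖ ^ 2 := by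
    intro s
    have hx : ‖ξ s‖ = ‖deriv σ s • deriv ξ s + σ s • deriv (deriv ξ) s‖ := by
      rw [show deriv σ s • deriv ξ s + σ s • deriv (deriv ξ) s = -ξ s by
        rw [← hODE s]; abel]
      rw [norm_neg]
    rw [hx, norm_add_sq_real, norm_smul, norm_smul,
      real_inner_smul_left, real_inner_smul_right, horth s, hspeed s]
    simp [Real.norm_eq_abs, mul_pow, sq_abs]
  -- F = σ + ½⟪ξ,ξ⟫ is constant
  have hFD : ∀ s, HasDerivAt (fun t => σ t + (1/2) * (inner ℝ (ξ t) (ξ t) : ℝ)) 0 s := by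
    intro s
    have hI : HasDerivAt (fun t => (inner ℝ (ξ t) (ξ t) : ℝ))
        ((inner ℝ (ξ s) (deriv ξ s) : ℝ) + (inner ℝ (deriv ξ s) (ξ s) : ℝ)) s := (Hξ s).inner ℝ (Hξ s)
    have h := (Hσ s).add (hI.const_mul (1/2 : ℝ))
    refine h.congr_deriv (Eq.symm ?_)
    have hcomm : (inner ℝ (deriv ξ s) (ξ s) : ℝ) = inner ℝ (ξ s) (deriv ξ s) :=
      real_inner_comm _ _
    linarith [hb' s, hcomm]
  have hFconst : ∀ s, σ s + (1/2) * (inner ℝ (ξ s) (ξ s) : ℝ) = σ 0 + (1/2) * (inner ℝ (ξ 0) (ξ 0) : ℝ) := fun s =>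
    is_const_of_deriv_eq_zero (fun t => (hFD t).differentiableAt) (fun t => (hFD t).deriv) s 0
  have hFconst' : ∀ s, σ s + (1/2) * ‖ξ s‖ ^ 2 = σ 0 + (1/2) * ‖ξ 0‖ ^ 2 := by
    intro s
    have h := hFconst s
    rwa [real_inner_self_eq_norm_sq, real_inner_self_eq_norm_sq] at h
  -- periodicity of deriv ξ
  have hperξ' : ∀ x, deriv ξ (x + 1) = deriv ξ x := by
    intro x
    have he : (fun t => ξ (t + 1)) = ξ := funext fun t => hperξ t
    calc deriv ξ (x + 1) = deriv (fun t => ξ (t + 1)) x := (deriv_comp_add_const ξ 1 x).symm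
      _ = deriv ξ x := by rw [he]
  -- part (a)
  have hGD : ∀ s, HasDerivAt (fun t => σ t * (inner ℝ (deriv ξ t) (ξ t) : ℝ)) (σ s - ‖ξ s‖ ^ 2) s := by
    intro s
    have hI : HasDerivAt (fun t => (inner ℝ (deriv ξ t) (ξ t) : ℝ))
        ((inner ℝ (deriv ξ s) (deriv ξ s) : ℝ) + (inner ℝ (deriv (deriv ξ) s) (ξ s) : ℝ)) s := (Hξ' s).inner ℝ (Hξ s)
    have h := (Hσ s).mul hI
    refine h.congr_deriv (Eq.symm ?_)
    have hv : σ s • deriv (deriv ξ) s = -ξ s - deriv σ s • deriv ξ s := by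
      have h2 := hODE s
      linear_combination (norm := module) h2
    have h2 : σ s * (inner ℝ (deriv (deriv ξ) s) (ξ s) : ℝ)
        = -‖ξ s‖ ^ 2 - deriv σ s * (inner ℝ (deriv ξ s) (ξ s) : ℝ) := by
      rw [← real_inner_smul_left, hv, inner_sub_left, inner_neg_left, real_inner_smul_left,
        real_inner_self_eq_norm_sq]
    rw [hone s]
    linear_combination -h2
  have hcont_a : Continuous (fun s => σ s - ‖ξ s‖ ^ 2) := hσc.sub ((hξc.norm).pow 2)
  have hInt : (∫ s in (0:ℝ)..1, (σ s - ‖ξ s‖ ^ 2)) = 0 := by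
    rw [intervalIntegral.integral_eq_sub_of_hasDerivAt
      (fun s _ => hGD s) (hcont_a.intervalIntegrable 0 1)]
    rw [show (1:ℝ) = 0 + 1 by norm_num, hperσ 0, hperξ' 0, hperξ 0]
    ring
  have hintσ : IntervalIntegrable σ volume 0 1 := hσc.intervalIntegrable 0 1
  have hintξ : IntervalIntegrable (fun s => ‖ξ s‖ ^ 2) volume 0 1 :=
    ((hξc.norm).pow 2).intervalIntegrable 0 1
  have parta : (∫ s in (0:ℝ)..1, σ s) = ∫ s in (0:ℝ)..1, ‖ξ s‖ ^ 2 := by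
    rw [intervalIntegral.integral_sub hintσ hintξ] at hInt
    linarith
  set A : ℝ := ∫ r in (0:ℝ)..1, σ r with hAdef
  have hApos : 0 < A :=
    intervalIntegral.intervalIntegral_pos_of_pos hintσ hσpos one_pos
  -- part (b)
  have partb : ∀ s, σ s + (1/2) * ‖ξ s‖ ^ 2 = (3/2) * A := by
    have hintF : (∫ s in (0:ℝ)..1, (σ s + (1/2) * ‖ξ s‖ ^ 2)) = (3/2) * A := by
      rw [intervalIntegral.integral_add hintσ (hintξ.const_mul (1/2)),
        intervalIntegral.integral_const_mul, ← parta]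
      ring
    have hCeq : (∫ s in (0:ℝ)..1, (σ s + (1/2) * ‖ξ s‖ ^ 2))
        = σ 0 + (1/2) * ‖ξ 0‖ ^ 2 := by
      rw [intervalIntegral.integral_congr (g := fun _ => σ 0 + (1/2) * ‖ξ 0‖ ^ 2)
        (fun x _ => hFconst' x)]
      simp
    intro s
    rw [hFconst' s, ← hCeq, hintF]
  -- the energy E is constant
  have hmult' : ∀ s, deriv (deriv σ) s = σ s * ‖deriv (deriv ξ) s‖ ^ 2 - 1 := by
    intro s; have := hmult s; linarith
  have hED : ∀ s, HasDerivAt (fun t => 2 * (σ t) ^ 2 * (deriv σ t) ^ 2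
      + 4 * (σ t) ^ 3 - 6 * A * (σ t) ^ 2) 0 s := by
    intro s
    have h := (((((Hσ s).pow 2).const_mul (2:ℝ)).mul ((Hσ' s).pow 2)).add
      (((Hσ s).pow 3).const_mul (4:ℝ))).sub (((Hσ s).pow 2).const_mul (6*A))
    refine h.congr_deriv (Eq.symm ?_)
    have hk : (σ s) ^ 2 * ‖deriv (deriv ξ) s‖ ^ 2 = ‖ξ s‖ ^ 2 - (deriv σ s) ^ 2 := by
      have := hframe s; linarith
    have hN : ‖ξ s‖ ^ 2 = 3 * A - 2 * σ s := by
      have := partb s; linarith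
    simp only [Pi.pow_apply]
    linear_combination (-4*(σ s)^2*deriv σ s) * (hmult' s) + (-4*σ s*deriv σ s) * hk
      + (-4*σ s*deriv σ s) * hN
  have hEconst : ∀ s, 2 * (σ s) ^ 2 * (deriv σ s) ^ 2 + 4 * (σ s) ^ 3 - 6 * A * (σ s) ^ 2
      = 2 * (σ 0) ^ 2 * (deriv σ 0) ^ 2 + 4 * (σ 0) ^ 3 - 6 * A * (σ 0) ^ 2 := fun s =>
    is_const_of_deriv_eq_zero (fun t => (hED t).differentiableAt) (fun t => (hED t).deriv) s 0
  set lam : ℝ := 2 * (σ 0) ^ 2 * (deriv σ 0) ^ 2 + 4 * (σ 0) ^ 3 - 6 * A * (σ 0) ^ 2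
    with hlamdef
  -- global minimum of σ
  obtain ⟨s₁, hs₁⟩ : ∃ s₁, ∀ t, σ s₁ ≤ σ t := by
    obtain ⟨s₁, _, hmin⟩ := isCompact_Icc.exists_isMinOn
      (Set.nonempty_Icc.mpr zero_le_one) (hσc.continuousOn (s := Set.Icc (0:ℝ) 1))
    refine ⟨s₁, fun t => ?_⟩
    have hfr : σ t = σ (Int.fract t) := by
      rw [Int.fract]
      have h := hperσ.sub_int_mul_eq (x := t) ⌊t⌋
      rw [mul_one] at h
      exact h.symm
    rw [hfr]
    exact hmin (Set.mem_Icc.mpr ⟨Int.fract_nonneg t, (Int.fract_lt_one t).le⟩)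
  have hd0 : deriv σ s₁ = 0 := (IsLocalMin.deriv_eq_zero (Filter.Eventually.of_forall hs₁))
  have hlam1 : lam = 4 * (σ s₁) ^ 3 - 6 * A * (σ s₁) ^ 2 := by
    have h := hEconst s₁
    rw [hd0] at h
    rw [hlamdef]
    linarith
  have hle : σ s₁ ≤ A := by
    have h1 : (∫ _ in (0:ℝ)..1, σ s₁) ≤ ∫ r in (0:ℝ)..1, σ r :=
      intervalIntegral.integral_mono_on zero_le_one intervalIntegrable_const hintσ
        (fun x _ => hs₁ x)
    simpa using h1
  refine ⟨parta, partb, lam, Set.mem_Ico.mpr ⟨?_, ?_⟩, ?_⟩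
  · -- lower bound
    rw [hlamdef]
    nlinarith [sq_nonneg (σ 0 * deriv σ 0),
      mul_nonneg (sq_nonneg (σ 0 - A)) (le_of_lt (show (0:ℝ) < 2 * σ 0 + A by
        have := hσpos 0; linarith))]
  · -- upper bound
    rw [hlam1]
    nlinarith [mul_pos (mul_pos (hσpos s₁) (hσpos s₁))
      (show (0:ℝ) < 3 * A - 2 * σ s₁ by linarith)]
  · -- the first integral
    intro s
    have hd2 : deriv (fun r => σ r ^ 2) s = 2 * σ s * deriv σ s := by
      rw [show (fun r => σ r ^ 2) = σ ^ 2 from rfl, ((Hσ s).pow 2).deriv]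
      ring
    have hrpow : ((σ s ^ 2 : ℝ)) ^ ((3:ℝ)/2) = σ s ^ 3 := by
      have h0 : (0:ℝ) ≤ σ s := (hσpos s).le
      rw [← Real.rpow_natCast (σ s) 2, ← Real.rpow_mul h0]
      rw [show ((2:ℕ):ℝ) * ((3:ℝ)/2) = ((3:ℕ):ℝ) by norm_num, Real.rpow_natCast]
    rw [hd2, hrpow]
    linear_combination hEconst s
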